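/- Let Ω be a conformal α-regular domain about a simply connected domain Ω' (for some 2 < α < ∞), with conformal mapping φ : Ω' → Ω, and let h = J_{φ^{-1}} = |(φ^{-1})'|² be the conformal weight on Ω. Then for every function f ∈ L^r(Ω,h) with α/(α−2) ≤ r < ∞, setting s = ((α−2)/α)·r, the inequality ‖f‖_{L^s(Ω)} ≤ (∬_{Ω'} |φ'(u,v)|^α du dv)^{(2/α)·(1/s)} · ‖f | L^r(Ω,h)‖ holds; i.e. the weighted Lebesgue space L^r(Ω,h) embeds into the unweighted space L^s(Ω) with this explicit norm bound. -/

import Mathlib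

open MeasureTheory Real Set
open scoped ENNReal NNReal

noncomputable section

/-- A smooth real-valued function compactly supported inside `Ω`
(the test functions whose closure in the corresponding (semi-)norm gives
`W^{1,2}_0(Ω)`, resp. `L^{1,2}_0(Ω)`). -/
def IsTestFun (Ω : Set ℂ) (f : ℂ → ℝ) : Prop :=
  ContDiff ℝ (⊤ : ℕ∞) f ∧ HasCompactSupport f ∧ tsupport f ⊆ Ω

/-- A conformal mapping of `Ω'` onto `Ω`: a holomorphic bijection of `Ω'`
onto `Ω` with nonvanishing derivative. -/
def ConformalOn (φ : ℂ → ℂ) (Ω' Ω : Set ℂ) : Prop :=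
  DifferentiableOn ℂ φ Ω' ∧ Set.InjOn φ Ω' ∧ φ '' Ω' = Ω ∧ ∀ z ∈ Ω', deriv φ z ≠ 0

/-- The first Dirichlet eigenvalue of the Laplacian on `Ω`, as the infimum of the
Rayleigh quotients over (a dense class of) nonzero functions of `W^{1,2}_0(Ω)`. -/
def firstEigenvalue (Ω : Set ℂ) : ℝ :=
  sInf ((fun f => (∫ z in Ω, ‖fderiv ℝ f z‖ ^ 2) / (∫ z in Ω, (f z) ^ 2)) ''
    {f : ℂ → ℝ | IsTestFun Ω f ∧ f ≠ 0})

/-- The best constant `A_{r,2}(Ω)` in the Poincaré–Sobolev inequality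
`‖f‖_{L^r(Ω)} ≤ A ‖∇f‖_{L²(Ω)}` for `f ∈ W^{1,2}_0(Ω)`. -/
def bestPSConst (Ω : Set ℂ) (r : ℝ) : ℝ :=
  sInf {A : ℝ | 0 ≤ A ∧ ∀ f : ℂ → ℝ, IsTestFun Ω f →
    (∫ z in Ω, |f z| ^ r) ^ (1 / r) ≤ A * (∫ z in Ω, ‖fderiv ℝ f z‖ ^ 2) ^ (1/2 : ℝ)}

/-- The `L^∞(D)`-norm (essential supremum of the modulus) of `g : ℂ → ℂ` on `D`. -/
def linfNorm (D : Set ℂ) (g : ℂ → ℂ) : ℝ :=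
  (essSup (fun z => (‖g z‖₊ : ℝ≥0∞)) (volume.restrict D)).toReal


private lemma det_cmul_aux (c : ℂ) :
    (((1 : ℂ →L[ℂ] ℂ).smulRight c).restrictScalars ℝ : ℂ →L[ℝ] ℂ).det = Complex.normSq c := by
  have h : (((1 : ℂ →L[ℂ] ℂ).smulRight c).restrictScalars ℝ : ℂ →ₗ[ℝ] ℂ)
      = Algebra.lmul ℝ ℂ c := by
    ext z
    · simp [mul_comm]
  rw [ContinuousLinearMap.det, h]
  exact (Algebra.norm_apply (R := ℝ) c).symm.trans (Algebra.norm_complex_apply c)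

/-- For a conformal `α`-regular domain `Ω` about `Ω'`, the weighted space
`L^r(Ω,h)` with conformal weight `h = |(φ⁻¹)'|²` embeds into `L^s(Ω)`,
`s = r·(α−2)/α`, with explicit norm bound. -/
theorem weighted_lebesgue_embedding
    (Ω Ω' : Set ℂ) (φ ψ : ℂ → ℂ) (α : ℝ) (hα : 2 < α)
    (hΩ : IsOpen Ω) (hΩ' : IsOpen Ω')
    (hΩc : IsConnected Ω) (hΩ'c : IsConnected Ω')
    (hΩsc : SimplyConnectedSpace Ω) (hΩ'sc : SimplyConnectedSpace Ω')
    (hφ : ConformalOn φ Ω' Ω)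
    -- conformal `α`-regularity: `∬_{Ω'} |φ'|^α < ∞`
    (hreg : IntegrableOn (fun z => ‖deriv φ z‖ ^ α) Ω')
    -- `ψ = φ⁻¹ : Ω → Ω'` is the (holomorphic) inverse of `φ`
    (hψ : DifferentiableOn ℂ ψ Ω)
    (hinv : ∀ z ∈ Ω', ψ (φ z) = z) (hinv' : ∀ w ∈ Ω, φ (ψ w) = w)
    (r s : ℝ) (hr : α / (α - 2) ≤ r) (hs : s = (α - 2) / α * r)
    -- `f ∈ L^r(Ω, h)` with `h = |(φ⁻¹)'|²`
    (f : ℂ → ℝ) (hfm : AEStronglyMeasurable f (volume.restrict Ω))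
    (hfL : IntegrableOn (fun w => |f w| ^ r * ‖deriv ψ w‖ ^ 2) Ω) :
    (∫ w in Ω, |f w| ^ s) ^ (1 / s) ≤
      (∫ z in Ω', ‖deriv φ z‖ ^ α) ^ (2 / α * (1 / s)) *
        (∫ w in Ω, |f w| ^ r * ‖deriv ψ w‖ ^ 2) ^ (1 / r) := by

  classical
  subst hs
  set s : ℝ := (α - 2) / α * r with hs
  have hα0 : (0:ℝ) < α := by linarith
  have hα2 : (0:ℝ) < α - 2 := by linarith
  have hr0 : (0:ℝ) < r := lt_of_lt_of_le (div_pos hα0 hα2) hr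
  have hs0 : (0:ℝ) < s := mul_pos (div_pos hα2 hα0) hr0
  set p : ℝ := α / (α - 2) with hp
  set q : ℝ := α / 2 with hq
  have hp1 : 1 < p := by rw [hp, lt_div_iff₀ hα2]; linarith
  have hpq : p.HolderConjugate q := Real.holderConjugate_iff.2 ⟨hp1, by rw [hp, hq]; field_simp; ring⟩
  have hsp : s * p = r := by rw [hs, hp]; field_simp
  set t : ℝ := 2 * s / r with ht
  have ht0 : 0 < t := by positivity
  have htp : t * p = 2 := by rw [ht, hs, hp]; field_simp
  have htq : t * q = α - 2 := by rw [ht, hs, hq]; field_simp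
  -- the derivative of the inverse map
  have hmul : ∀ z ∈ Ω', deriv φ z * deriv ψ (φ z) = 1 := by
    intro z hz
    have hw : φ z ∈ Ω := hφ.2.2.1 ▸ Set.mem_image_of_mem φ hz
    have hψd : HasDerivAt ψ (deriv ψ (φ z)) (φ z) :=
      ((hψ (φ z) hw).differentiableAt (hΩ.mem_nhds hw)).hasDerivAt
    have hφd : HasDerivAt φ (deriv φ z) (ψ (φ z)) := by
      rw [hinv z hz]
      exact ((hφ.1 z hz).differentiableAt (hΩ'.mem_nhds hz)).hasDerivAt
    have comp : HasDerivAt (φ ∘ ψ) (deriv φ z * deriv ψ (φ z)) (φ z) :=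
      HasDerivAt.comp (φ z) (by rwa [hinv z hz] at hφd ⊢) hψd
    have id' : HasDerivAt (φ ∘ ψ) 1 (φ z) := by
      have he : (φ ∘ ψ) =ᶠ[nhds (φ z)] id := by
        filter_upwards [hΩ.mem_nhds hw] with w hw' using hinv' w hw'
      exact (hasDerivAt_id (φ z)).congr_of_eventuallyEq he
    exact comp.unique id'
  have hKpos : ∀ w ∈ Ω, 0 < ‖deriv ψ w‖ := by
    intro w hw
    obtain ⟨z, hz, rfl⟩ := hφ.2.2.1 ▸ hw
    have h1 := hmul z hz
    have h2 : deriv ψ (φ z) ≠ 0 := by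
      intro h0; rw [h0, mul_zero] at h1; exact zero_ne_one h1
    simpa [norm_pos_iff] using h2
  -- change of variables
  have hcov : (∫⁻ w in Ω, ENNReal.ofReal ((‖deriv ψ w‖⁻¹) ^ (α - 2)) ∂volume)
      = ∫⁻ z in Ω', ENNReal.ofReal (‖deriv φ z‖ ^ α) ∂volume := by
    have himg : Ω = φ '' Ω' := hφ.2.2.1.symm
    rw [himg]
    rw [lintegral_image_eq_lintegral_abs_det_fderiv_mul volume hΩ'.measurableSet
      (f' := fun z => ((1 : ℂ →L[ℂ] ℂ).smulRight (deriv φ z)).restrictScalars ℝ)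
      (fun z hz => (((hφ.1 z hz).differentiableAt
        (hΩ'.mem_nhds hz)).hasDerivAt.hasFDerivAt.restrictScalars ℝ).hasFDerivWithinAt)
      hφ.2.1]
    refine setLIntegral_congr_fun hΩ'.measurableSet ?_
    intro z hz
    have hd : deriv φ z ≠ 0 := hφ.2.2.2 z hz
    have hn : (0:ℝ) < ‖deriv φ z‖ := norm_pos_iff.2 hd
    have hψφ : ‖deriv ψ (φ z)‖ = ‖deriv φ z‖⁻¹ := by
      have h1 := hmul z hz
      have h2 : ‖deriv φ z‖ * ‖deriv ψ (φ z)‖ = 1 := by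
        rw [← norm_mul, h1, norm_one]
      exact (inv_eq_of_mul_eq_one_right h2).symm
    beta_reduce
    rw [det_cmul_aux, Complex.normSq_eq_norm_sq]
    rw [hψφ, inv_inv, ← ENNReal.ofReal_mul (by positivity)]
    congr 1
    rw [abs_of_nonneg (by positivity)]
    rw [show ‖deriv φ z‖ ^ (2:ℕ) = ‖deriv φ z‖ ^ ((2:ℕ):ℝ) from
      (Real.rpow_natCast _ 2).symm, ← Real.rpow_add hn]
    norm_num
  -- measurability
  have hKm : Measurable fun w => ‖deriv ψ w‖ := (measurable_deriv ψ).norm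
  have hfa : AEStronglyMeasurable (fun w => |f w|) (volume.restrict Ω) :=
    continuous_abs.comp_aestronglyMeasurable hfm
  set m := volume.restrict Ω with hm
  set F : ℂ → ℝ≥0∞ := fun w => ENNReal.ofReal (|f w| ^ s * ‖deriv ψ w‖ ^ t) with hF
  set G : ℂ → ℝ≥0∞ := fun w => ENNReal.ofReal ((‖deriv ψ w‖⁻¹) ^ t) with hG
  have hFmeas : AEMeasurable F m := by
    refine AEMeasurable.ennreal_ofReal (AEMeasurable.mul ?_ ?_)
    · exact ((Real.continuous_rpow_const hs0.le).comp_aestronglyMeasurable hfa).aemeasurable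
    · exact ((Real.continuous_rpow_const ht0.le).measurable.comp hKm).aemeasurable
  have hGmeas : AEMeasurable G m :=
    (((Real.continuous_rpow_const ht0.le).measurable.comp hKm.inv)).aemeasurable.ennreal_ofReal
  -- Hölder's inequality
  have hHolder := ENNReal.lintegral_mul_le_Lp_mul_Lq m hpq hFmeas hGmeas
  -- identify the three integrals
  have hFG : (∫⁻ w, (F * G) w ∂m) = ∫⁻ w, ENNReal.ofReal (|f w| ^ s) ∂m := by
    refine lintegral_congr_ae ?_
    rw [hm]
    filter_upwards [ae_restrict_mem hΩ.measurableSet] with w hw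
    have hK := hKpos w hw
    simp only [Pi.mul_apply, hF, hG]
    rw [← ENNReal.ofReal_mul (by positivity)]
    congr 1
    rw [mul_assoc, ← Real.mul_rpow hK.le (inv_nonneg.2 hK.le),
      mul_inv_cancel₀ hK.ne', Real.one_rpow, mul_one]
  have hIA0 : 0 ≤ ∫ w in Ω, |f w| ^ r * ‖deriv ψ w‖ ^ 2 :=
    integral_nonneg fun w => by positivity
  have hIB0 : 0 ≤ ∫ z in Ω', ‖deriv φ z‖ ^ α :=
    integral_nonneg fun z => by positivity
  have hFp : (∫⁻ w, F w ^ p ∂m)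
      = ENNReal.ofReal (∫ w in Ω, |f w| ^ r * ‖deriv ψ w‖ ^ 2) := by
    rw [MeasureTheory.ofReal_integral_eq_lintegral_ofReal hfL
      (Filter.Eventually.of_forall fun w => by positivity)]
    refine lintegral_congr fun w => ?_
    show ENNReal.ofReal (|f w| ^ s * ‖deriv ψ w‖ ^ t) ^ p = _
    rw [ENNReal.ofReal_rpow_of_nonneg (by positivity) (le_of_lt hpq.pos)]
    congr 1
    rw [Real.mul_rpow (by positivity) (by positivity),
      ← Real.rpow_mul (abs_nonneg _), ← Real.rpow_mul (norm_nonneg _), hsp, htp]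
    rw [show ‖deriv ψ w‖ ^ (2:ℝ) = ‖deriv ψ w‖ ^ ((2:ℕ):ℝ) by norm_num,
      Real.rpow_natCast]
  have hGq : (∫⁻ w, G w ^ q ∂m)
      = ENNReal.ofReal (∫ z in Ω', ‖deriv φ z‖ ^ α) := by
    rw [MeasureTheory.ofReal_integral_eq_lintegral_ofReal hreg
      (Filter.Eventually.of_forall fun z => by positivity), ← hcov]
    refine lintegral_congr fun w => ?_
    show ENNReal.ofReal ((‖deriv ψ w‖⁻¹) ^ t) ^ q = _
    rw [ENNReal.ofReal_rpow_of_nonneg (by positivity) (le_of_lt hpq.symm.pos)]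
    congr 1
    rw [← Real.rpow_mul (by positivity), htq]
  rw [hFG, hFp, hGq] at hHolder
  -- converting back to real integrals
  set IA := ∫ w in Ω, |f w| ^ r * ‖deriv ψ w‖ ^ 2 with hIA
  set IB := ∫ z in Ω', ‖deriv φ z‖ ^ α with hIB
  have hRHSne : ENNReal.ofReal IA ^ (1 / p) * ENNReal.ofReal IB ^ (1 / q) ≠ ⊤ := by
    refine ENNReal.mul_ne_top ?_ ?_
    · exact (ENNReal.rpow_lt_top_of_nonneg (by positivity) ENNReal.ofReal_ne_top).ne
    · exact (ENNReal.rpow_lt_top_of_nonneg (by positivity) ENNReal.ofReal_ne_top).ne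
  have hfsm : AEStronglyMeasurable (fun w => |f w| ^ s) m :=
    (Real.continuous_rpow_const hs0.le).comp_aestronglyMeasurable hfa
  have hint : (∫ w in Ω, |f w| ^ s)
      = (∫⁻ w, ENNReal.ofReal (|f w| ^ s) ∂m).toReal := by
    rw [hm, MeasureTheory.integral_eq_lintegral_of_nonneg_ae
      (Filter.Eventually.of_forall fun w => by positivity) (hm ▸ hfsm)]
  have hreal : (∫ w in Ω, |f w| ^ s) ≤ IA ^ (1 / p) * IB ^ (1 / q) := by
    rw [hint]
    calc (∫⁻ w, ENNReal.ofReal (|f w| ^ s) ∂m).toReal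
        ≤ (ENNReal.ofReal IA ^ (1 / p) * ENNReal.ofReal IB ^ (1 / q)).toReal :=
          ENNReal.toReal_mono hRHSne hHolder
      _ = IA ^ (1 / p) * IB ^ (1 / q) := by
          rw [ENNReal.toReal_mul, ← ENNReal.toReal_rpow, ← ENNReal.toReal_rpow,
            ENNReal.toReal_ofReal hIA0, ENNReal.toReal_ofReal hIB0]
  have hintnn : 0 ≤ ∫ w in Ω, |f w| ^ s := integral_nonneg fun w => by positivity
  have hfinal := Real.rpow_le_rpow hintnn hreal (by positivity : (0:ℝ) ≤ 1 / s)
  calc (∫ w in Ω, |f w| ^ s) ^ (1 / s)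
      ≤ (IA ^ (1 / p) * IB ^ (1 / q)) ^ (1 / s) := hfinal
    _ = IB ^ (2 / α * (1 / s)) * IA ^ (1 / r) := by
        rw [Real.mul_rpow (by positivity) (by positivity),
          ← Real.rpow_mul hIA0, ← Real.rpow_mul hIB0]
        rw [show 1 / p * (1 / s) = 1 / r by
            rw [← hsp]; field_simp,
          show 1 / q * (1 / s) = 2 / α * (1 / s) by
            rw [hq]; rw [one_div_div],
          mul_comm]
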